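/- For every even n > 2, there exists a unitary U ∈ U(ℂ^n ⊗ ℂ^n) with operator Schmidt rank Ω(U) = n + 1. -/

import Mathlib

open Matrix Kronecker

/-- The realignment (reshuffling) of a bipartite operator. -/
def realign {n m : ℕ} (X : Matrix (Fin n × Fin m) (Fin n × Fin m) ℂ) :
    Matrix (Fin n × Fin n) (Fin m × Fin m) ℂ :=
  Matrix.of fun p q => X (p.1, q.1) (p.2, q.2)

/-- The operator Schmidt rank of a bipartite operator, i.e. the rank
of its realignment. -/
noncomputable def osr {n m : ℕ} (X : Matrix (Fin n × Fin m) (Fin n × Fin m) ℂ) : ℕ :=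
  (realign X).rank

namespace Stmt15Aux

open Submodule

noncomputable def r : ℂ := ((Real.sqrt 2 : ℝ) : ℂ)⁻¹

lemma conj_r : star r = r := by
  simp [r, ← Complex.ofReal_inv]

lemma r_mul_r : r * r = 2⁻¹ := by
  rw [r, ← mul_inv, ← Complex.ofReal_mul, Real.mul_self_sqrt (by norm_num)]
  norm_num

lemma sqrt2_mul_r : ((Real.sqrt 2 : ℝ) : ℂ) * r = 1 := by
  rw [r, mul_inv_cancel₀]
  exact_mod_cast Real.sqrt_ne_zero'.2 (by norm_num)

def eps {N : ℕ} (j b : Fin N) : ℂ := if b = j then -1 else 1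

lemma conj_eps {N : ℕ} (j b : Fin N) : star (eps j b) = eps j b := by
  unfold eps; split <;> simp

lemma eps_mul_self {N : ℕ} (j b : Fin N) : eps j b * eps j b = 1 := by
  unfold eps; split <;> norm_num

variable (m : ℕ)

def top : Fin (m + 4) := ⟨m + 3, by omega⟩

lemma zero_ne_one' : (0 : Fin (m + 4)) ≠ 1 := by
  simp [Fin.ext_iff]

lemma top_ne_zero : top m ≠ 0 := by
  simp [top, Fin.ext_iff]

lemma top_ne_one : top m ≠ 1 := by
  simp [top, Fin.ext_iff]

def tau (e d : Fin (m + 4)) : Fin (m + 4) :=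
  if e = top m then Equiv.swap 0 1 d else d

lemma tau_inj {e b d : Fin (m + 4)} : tau m e b = tau m e d ↔ b = d := by
  unfold tau; split
  · exact (Equiv.swap 0 1).apply_eq_iff_eq
  · exact Iff.rfl

noncomputable def phi (e c d : Fin (m + 4)) : ℂ :=
  if e = 0 ∧ c = 0 then r * eps 0 d
  else if e = 0 ∧ c = 1 then r * eps 1 d
  else if e = 1 ∧ c = 0 then r * eps (top m) d
  else if e = 1 ∧ c = 1 then -(r * (eps 0 d * eps 1 d * eps (top m) d))
  else if e = c then (if e = top m then 1 else eps e d)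
  else 0

lemma phi_zero_right {e c : Fin (m + 4)} (h0 : e ≠ 0) (h1 : e ≠ 1) (hec : e ≠ c)
    (d : Fin (m + 4)) : phi m e c d = 0 := by
  simp [phi, h0, h1, hec]

lemma phi_zero_left {e c : Fin (m + 4)} (h0 : c ≠ 0) (h1 : c ≠ 1) (hec : e ≠ c)
    (d : Fin (m + 4)) : phi m e c d = 0 := by
  simp [phi, h0, h1, hec]

noncomputable def U : Matrix (Fin (m + 4) × Fin (m + 4)) (Fin (m + 4) × Fin (m + 4)) ℂ :=
  fun p q => if p.2 = tau m p.1 q.2 then phi m p.1 q.1 q.2 else 0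

lemma sum_eq_two (f : Fin (m + 4) → ℂ) (h : ∀ e, e ≠ 0 → e ≠ 1 → f e = 0) :
    ∑ e, f e = f 0 + f 1 := by
  rw [← Finset.sum_subset (Finset.subset_univ ({0, 1} : Finset (Fin (m + 4))))]
  · rw [Finset.sum_pair (zero_ne_one' m)]
  · intro e _ he
    simp only [Finset.mem_insert, Finset.mem_singleton] at he
    push_neg at he
    exact h e he.1 he.2

lemma one_ne_zero'' : (1 : Fin (m + 4)) ≠ 0 := (zero_ne_one' m).symm

lemma phi00 (d : Fin (m + 4)) : phi m 0 0 d = r * eps 0 d := by simp [phi]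
lemma phi01 (d : Fin (m + 4)) : phi m 0 1 d = r * eps 1 d := by
  simp [phi, zero_ne_one' m]
lemma phi10 (d : Fin (m + 4)) : phi m 1 0 d = r * eps (top m) d := by
  simp [phi, one_ne_zero'' m]
lemma phi11 (d : Fin (m + 4)) :
    phi m 1 1 d = -(r * (eps 0 d * eps 1 d * eps (top m) d)) := by
  simp [phi, one_ne_zero'' m]

lemma phi_orth (a c b : Fin (m + 4)) :
    ∑ e, star (phi m e a b) * phi m e c b = if a = c then 1 else 0 := by
  have h0 := eps_mul_self (0 : Fin (m + 4)) b
  have h1 := eps_mul_self (1 : Fin (m + 4)) b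
  have ht := eps_mul_self (top m) b
  have hr := r_mul_r
  rcases eq_or_ne a 0 with rfl | ha0
  · rcases eq_or_ne c 0 with rfl | hc0
    · rw [sum_eq_two]
      · rw [phi00, phi10, if_pos rfl]
        simp only [star_mul', conj_r, conj_eps]
        linear_combination (eps 0 b * eps 0 b + eps (top m) b * eps (top m) b) * hr +
          2⁻¹ * h0 + 2⁻¹ * ht
      · intro e he0 he1
        rw [phi_zero_right m he0 he1 he0, star_zero, zero_mul]
    · rcases eq_or_ne c 1 with rfl | hc1
      · rw [sum_eq_two]
        · rw [phi00, phi01, phi10, phi11, if_neg (zero_ne_one' m)]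
          simp only [star_mul', star_neg, conj_r, conj_eps]
          linear_combination (-(r * r * eps 0 b * eps 1 b)) * ht
        · intro e he0 he1
          rw [phi_zero_right m he0 he1 he0, star_zero, zero_mul]
      · rw [if_neg (Ne.symm hc0), Finset.sum_eq_zero]
        intro e _
        rcases eq_or_ne e 0 with rfl | he0
        · rw [phi_zero_left m hc0 hc1 (Ne.symm hc0), mul_zero]
        · rcases eq_or_ne e 1 with rfl | he1
          · rw [phi_zero_left m hc0 hc1 (Ne.symm hc1), mul_zero]
          · rw [phi_zero_right m he0 he1 he0, star_zero, zero_mul]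
  · rcases eq_or_ne a 1 with rfl | ha1
    · rcases eq_or_ne c 0 with rfl | hc0
      · rw [sum_eq_two]
        · rw [phi00, phi01, phi10, phi11, if_neg (one_ne_zero'' m)]
          simp only [star_mul', star_neg, conj_r, conj_eps]
          linear_combination (-(r * r * eps 0 b * eps 1 b)) * ht
        · intro e he0 he1
          rw [phi_zero_right m he0 he1 he1, star_zero, zero_mul]
      · rcases eq_or_ne c 1 with rfl | hc1
        · rw [sum_eq_two]
          · rw [phi01, phi11, if_pos rfl]
            simp only [star_mul', star_neg, conj_r, conj_eps]
            linear_combination (eps 1 b * eps 1 b + eps 0 b * eps 0 b * (eps 1 b * eps 1 b)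
                * (eps (top m) b * eps (top m) b)) * hr
              + (2⁻¹ * eps 1 b * eps 1 b * eps (top m) b * eps (top m) b) * h0
              + (2⁻¹ + 2⁻¹ * eps (top m) b * eps (top m) b) * h1 + 2⁻¹ * ht
          · intro e he0 he1
            rw [phi_zero_right m he0 he1 he1, star_zero, zero_mul]
        · rw [if_neg (Ne.symm hc1), Finset.sum_eq_zero]
          intro e _
          rcases eq_or_ne e 0 with rfl | he0
          · rw [phi_zero_left m hc0 hc1 (Ne.symm hc0), mul_zero]
          · rcases eq_or_ne e 1 with rfl | he1
            · rw [phi_zero_left m hc0 hc1 (Ne.symm hc1), mul_zero]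
            · rw [phi_zero_right m he0 he1 he1, star_zero, zero_mul]
    · rcases eq_or_ne a c with rfl | hac
      · rw [if_pos rfl, Finset.sum_eq_single a]
        · have hphi : phi m a a b = if a = top m then 1 else eps a b := by
            simp [phi, ha0, ha1]
          rw [hphi]
          split
          · simp
          · rw [conj_eps]; exact eps_mul_self a b
        · intro e _ hea
          rcases eq_or_ne e 0 with rfl | he0
          · rw [phi_zero_left m ha0 ha1 (Ne.symm ha0), star_zero, zero_mul]
          · rcases eq_or_ne e 1 with rfl | he1
            · rw [phi_zero_left m ha0 ha1 (Ne.symm ha1), star_zero, zero_mul]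
            · rw [phi_zero_right m he0 he1 hea, star_zero, zero_mul]
        · intro h; exact absurd (Finset.mem_univ a) h
      · rw [if_neg hac, Finset.sum_eq_zero]
        intro e _
        rcases eq_or_ne e 0 with rfl | he0
        · rw [phi_zero_left m ha0 ha1 (Ne.symm ha0), star_zero, zero_mul]
        · rcases eq_or_ne e 1 with rfl | he1
          · rw [phi_zero_left m ha0 ha1 (Ne.symm ha1), star_zero, zero_mul]
          · rcases eq_or_ne e a with rfl | hea
            · rw [phi_zero_right m he0 he1 hac, mul_zero]
            · rw [phi_zero_right m he0 he1 hea, star_zero, zero_mul]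

lemma U_unitary : U m ∈ Matrix.unitaryGroup (Fin (m + 4) × Fin (m + 4)) ℂ := by
  rw [Matrix.mem_unitaryGroup_iff']
  ext ⟨a, b⟩ ⟨c, d⟩
  rw [Matrix.mul_apply, Matrix.one_apply, Fintype.sum_prod_type]
  have step : ∀ e : Fin (m + 4),
      (∑ f, star (U m) (a, b) (e, f) * U m (e, f) (c, d)) =
        if b = d then star (phi m e a b) * phi m e c d else 0 := by
    intro e
    have hpt : ∀ f : Fin (m + 4), star (U m) (a, b) (e, f) * U m (e, f) (c, d) =
        if f = tau m e b then
          (if f = tau m e d then star (phi m e a b) * phi m e c d else 0) else 0 := by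
      intro f
      simp only [Matrix.star_apply, U]
      split_ifs <;> simp
    rw [Finset.sum_congr rfl fun f _ => hpt f, Finset.sum_ite_eq' Finset.univ]
    simp [tau_inj m]
  rw [Finset.sum_congr rfl fun e _ => step e]
  rcases eq_or_ne b d with rfl | hbd
  · simp only [eq_self_iff_true, if_true]
    rw [phi_orth]
    simp [Prod.ext_iff]
  · simp [hbd, Prod.ext_iff]

/-! ### The spanning vectors -/

noncomputable def vecD (j : Fin (m + 4)) : Fin (m + 4) × Fin (m + 4) → ℂ :=
  fun p => if p.1 = p.2 then eps j p.2 else 0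

noncomputable def xvec : Fin (m + 4) × Fin (m + 4) → ℂ :=
  fun p => if p.1 = Equiv.swap 0 1 p.2 then 1 else 0

noncomputable def v : Option (Fin (m + 4)) → (Fin (m + 4) × Fin (m + 4) → ℂ)
  | none => xvec m
  | some j => vecD m j

lemma row_eq (a c : Fin (m + 4)) :
    realign (U m) (a, c) = fun p : Fin (m + 4) × Fin (m + 4) =>
      if p.1 = tau m a p.2 then phi m a c p.2 else 0 := rfl

lemma tau_of_ne_top {a : Fin (m + 4)} (ha : a ≠ top m) (d : Fin (m + 4)) :
    tau m a d = d := by simp [tau, ha]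

lemma sum_eps (d : Fin (m + 4)) : ∑ j, eps j d = ((m : ℂ) + 2) := by
  have : ∀ j : Fin (m + 4), eps j d = 1 - (if d = j then 2 else 0) := by
    intro j; unfold eps; split <;> norm_num
  rw [Finset.sum_congr rfl fun j _ => this j, Finset.sum_sub_distrib,
    Finset.sum_const, Finset.sum_ite_eq Finset.univ]
  simp [Fintype.card_fin]
  ring

lemma hm_ne : ((m : ℂ) + 2) ≠ 0 := by
  have h : ((m + 2 : ℕ) : ℂ) ≠ 0 := Nat.cast_ne_zero.mpr (by omega)
  exact_mod_cast h

lemma zero_ne_top : (0 : Fin (m + 4)) ≠ top m := Ne.symm (top_ne_zero m)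
lemma one_ne_top : (1 : Fin (m + 4)) ≠ top m := Ne.symm (top_ne_one m)

lemma row00 : realign (U m) (0, 0) = r • vecD m 0 := by
  funext p
  rw [row_eq]
  simp only [tau_of_ne_top m (zero_ne_top m), phi00, vecD, Pi.smul_apply, smul_eq_mul]
  split <;> simp

lemma row01 : realign (U m) (0, 1) = r • vecD m 1 := by
  funext p
  rw [row_eq]
  simp only [tau_of_ne_top m (zero_ne_top m), phi01, vecD, Pi.smul_apply, smul_eq_mul]
  split <;> simp

lemma row10 : realign (U m) (1, 0) = r • vecD m (top m) := by
  funext p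
  rw [row_eq]
  simp only [tau_of_ne_top m (one_ne_top m), phi10, vecD, Pi.smul_apply, smul_eq_mul]
  split <;> simp

lemma rowjj {j : Fin (m + 4)} (h0 : j ≠ 0) (h1 : j ≠ 1) (ht : j ≠ top m) :
    realign (U m) (j, j) = vecD m j := by
  funext p
  rw [row_eq]
  have hv : phi m j j p.2 = eps j p.2 := by simp [phi, h0, h1, ht]
  simp only [tau_of_ne_top m ht, hv, vecD]

lemma rowtt : realign (U m) (top m, top m) = xvec m := by
  funext p
  rw [row_eq]
  have hv : phi m (top m) (top m) p.2 = 1 := by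
    simp [phi, top_ne_zero m, top_ne_one m]
  simp [tau, hv, xvec]

lemma row_zero {a c : Fin (m + 4)} (h : ∀ d, phi m a c d = 0) :
    realign (U m) (a, c) = 0 := by
  funext p
  rw [row_eq]
  simp [h]

lemma row11 : realign (U m) (1, 1) =
    (-r) • vecD m 0 + (-r) • vecD m 1 + (-r) • vecD m (top m)
      + (2 * r / ((m : ℂ) + 2)) • ∑ j, vecD m j := by
  have hm := hm_ne m
  funext p
  obtain ⟨b, d⟩ := p
  rw [row_eq]
  simp only [tau_of_ne_top m (one_ne_top m), phi11, Pi.add_apply, Pi.smul_apply,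
    Finset.sum_apply, vecD, smul_eq_mul]
  rcases eq_or_ne b d with rfl | hbd
  · simp only [eq_self_iff_true, if_true]
    rw [sum_eps m b]
    rcases eq_or_ne b 0 with rfl | hb0
    · simp only [eps, if_pos rfl, if_neg (zero_ne_one' m), if_neg (zero_ne_top m)]
      rw [div_mul_cancel₀ _ hm]
      ring
    · rcases eq_or_ne b 1 with rfl | hb1
      · simp only [eps, if_pos rfl, if_neg (one_ne_zero'' m), if_neg (one_ne_top m)]
        rw [div_mul_cancel₀ _ hm]
        ring
      · rcases eq_or_ne b (top m) with rfl | hbt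
        · simp only [eps, if_pos rfl, if_neg (top_ne_zero m), if_neg (top_ne_one m)]
          rw [div_mul_cancel₀ _ hm]
          ring
        · simp only [eps, if_neg hb0, if_neg hb1, if_neg hbt]
          rw [div_mul_cancel₀ _ hm]
          ring
  · simp [hbd]

lemma row_mem (a c : Fin (m + 4)) :
    realign (U m) (a, c) ∈ span ℂ (Set.range (v m)) := by
  have hD : ∀ j, vecD m j ∈ span ℂ (Set.range (v m)) :=
    fun j => subset_span ⟨some j, rfl⟩
  rcases eq_or_ne a 0 with rfl | ha0
  · rcases eq_or_ne c 0 with rfl | hc0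
    · rw [row00]; exact smul_mem _ _ (hD 0)
    · rcases eq_or_ne c 1 with rfl | hc1
      · rw [row01]; exact smul_mem _ _ (hD 1)
      · rw [row_zero m fun d => phi_zero_left m hc0 hc1 (Ne.symm hc0) d]
        exact zero_mem _
  · rcases eq_or_ne a 1 with rfl | ha1
    · rcases eq_or_ne c 0 with rfl | hc0
      · rw [row10]; exact smul_mem _ _ (hD (top m))
      · rcases eq_or_ne c 1 with rfl | hc1
        · rw [row11]
          exact add_mem (add_mem (add_mem (smul_mem _ _ (hD 0)) (smul_mem _ _ (hD 1)))
            (smul_mem _ _ (hD (top m)))) (smul_mem _ _ (sum_mem fun j _ => hD j))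
        · rw [row_zero m fun d => phi_zero_left m hc0 hc1 (Ne.symm hc1) d]
          exact zero_mem _
    · rcases eq_or_ne a c with rfl | hac
      · rcases eq_or_ne a (top m) with rfl | hat
        · rw [rowtt]; exact subset_span ⟨none, rfl⟩
        · rw [rowjj m ha0 ha1 hat]; exact hD a
      · rw [row_zero m fun d => phi_zero_right m ha0 ha1 hac d]
        exact zero_mem _

lemma v_mem (o : Option (Fin (m + 4))) :
    v m o ∈ span ℂ (Set.range (realign (U m))) := by
  cases o with
  | none => exact subset_span ⟨(top m, top m), rowtt m⟩
  | some j =>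
    rcases eq_or_ne j 0 with rfl | hj0
    · have h : vecD m 0 = ((Real.sqrt 2 : ℝ) : ℂ) • realign (U m) (0, 0) := by
        rw [row00, smul_smul, sqrt2_mul_r, one_smul]
      rw [show v m (some 0) = vecD m 0 from rfl, h]
      exact smul_mem _ _ (subset_span ⟨(0, 0), rfl⟩)
    · rcases eq_or_ne j 1 with rfl | hj1
      · have h : vecD m 1 = ((Real.sqrt 2 : ℝ) : ℂ) • realign (U m) (0, 1) := by
          rw [row01, smul_smul, sqrt2_mul_r, one_smul]
        rw [show v m (some 1) = vecD m 1 from rfl, h]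
        exact smul_mem _ _ (subset_span ⟨(0, 1), rfl⟩)
      · rcases eq_or_ne j (top m) with rfl | hjt
        · have h : vecD m (top m) = ((Real.sqrt 2 : ℝ) : ℂ) • realign (U m) (1, 0) := by
            rw [row10, smul_smul, sqrt2_mul_r, one_smul]
          rw [show v m (some (top m)) = vecD m (top m) from rfl, h]
          exact smul_mem _ _ (subset_span ⟨(1, 0), rfl⟩)
        · exact subset_span ⟨(j, j), rowjj m hj0 hj1 hjt⟩

lemma span_eq : span ℂ (Set.range (realign (U m))) = span ℂ (Set.range (v m)) := by
  apply le_antisymm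
  · rw [span_le]
    rintro w ⟨⟨a, c⟩, rfl⟩
    exact row_mem m a c
  · rw [span_le]
    rintro w ⟨o, rfl⟩
    exact v_mem m o

lemma v_li : LinearIndependent ℂ (v m) := by
  rw [Fintype.linearIndependent_iff]
  intro g hg
  have happ : ∀ p : Fin (m + 4) × Fin (m + 4),
      g none * xvec m p + ∑ j, g (some j) * vecD m j p = 0 := by
    intro p
    have h2 := congrFun hg p
    simp only [Finset.sum_apply, Pi.smul_apply, smul_eq_mul, Pi.zero_apply] at h2
    rw [Fintype.sum_option] at h2
    simpa [v] using h2
  have hnone : g none = 0 := by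
    have h3 := happ (0, 1)
    simpa [xvec, vecD, zero_ne_one' m, Equiv.swap_apply_right] using h3
  have hsum : ∀ b : Fin (m + 4), ∑ j, g (some j) * eps j b = 0 := by
    intro b
    have h3 := happ (b, b)
    simpa [vecD, hnone] using h3
  have key : ∀ b, (∑ j, g (some j)) - 2 * g (some b) = 0 := by
    intro b
    have expand : ∀ j : Fin (m + 4), g (some j) * eps j b
        = g (some j) - (if b = j then 2 * g (some j) else 0) := by
      intro j; unfold eps; split <;> ring
    have h3 := hsum b
    rw [Finset.sum_congr rfl fun j _ => expand j, Finset.sum_sub_distrib,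
      Finset.sum_ite_eq Finset.univ] at h3
    simpa using h3
  have hσ : (∑ j, g (some j)) = 0 := by
    have hall : ∑ b, ((∑ j, g (some j)) - 2 * g (some b)) = 0 :=
      Finset.sum_eq_zero fun b _ => key b
    rw [Finset.sum_sub_distrib, Finset.sum_const, ← Finset.mul_sum] at hall
    simp only [Finset.card_univ, Fintype.card_fin, nsmul_eq_mul] at hall
    have h4 : ((m : ℂ) + 2) * (∑ j, g (some j)) = 0 := by
      push_cast at hall
      linear_combination hall
    exact (mul_eq_zero.mp h4).resolve_left (hm_ne m)
  intro o
  cases o with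
  | none => exact hnone
  | some j =>
    have h5 := key j
    rw [hσ] at h5
    simpa using h5

lemma rank_realign : osr (U m) = (m + 4) + 1 := by
  unfold osr
  rw [← Matrix.rank_transpose]
  unfold Matrix.rank
  rw [Matrix.range_mulVecLin, Matrix.col, Matrix.transpose_transpose, span_eq m,
    finrank_span_eq_card (v_li m)]
  simp

end Stmt15Aux

/-- For every even `n > 2` there is a unitary on `ℂ^n ⊗ ℂ^n` with operator
Schmidt rank `n + 1`. -/
theorem stmt15 (n : ℕ) (heven : Even n) (hn : 2 < n) :
    ∃ U ∈ Matrix.unitaryGroup (Fin n × Fin n) ℂ, osr U = n + 1 := by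
  obtain ⟨m, rfl⟩ : ∃ m, n = m + 4 := by
    refine ⟨n - 4, ?_⟩
    obtain ⟨k, hk⟩ := heven
    omega
  exact ⟨Stmt15Aux.U m, Stmt15Aux.U_unitary m, Stmt15Aux.rank_realign m⟩
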